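/- arXiv:1904.03347 — 2 statements merged into one kernel-verified Lean document; each statement's English description precedes it below -/
import Mathlib

section
/- (Property 2) Let C be an initial configuration of the BRP in which every stack is nonempty, and let 𝔅² be the top 1st layer of C. If the minimum label among the blocks of 𝔅² is strictly greater than the maximum over all stacks s of the minimum label occurring in stack s, then every feasible move sequence for C contains at least one BB relocation of a block of 𝔅²; that is, f_BB(𝔅²) ≥ 1. -/
/-- A configuration of the BRP: each stack holds a list of blocks, bottom to top. -/
abbrev Config (B S : ℕ) := Fin S → List (Fin B)

/-- Every block occurs exactly once among the stacks. -/
def IsConfig {B S : ℕ} (C : Config B S) : Prop :=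
  ∀ b : Fin B, (∑ s : Fin S, (C s).count b) = 1

/-- `a` lies strictly below `b` in stack `s` of `C`. -/
def StrictlyBelow {B S : ℕ} (C : Config B S) (s : Fin S) (a b : Fin B) : Prop :=
  ∃ i j : ℕ, i < j ∧ (C s)[i]? = some a ∧ (C s)[j]? = some b

/-- A block is badly placed if some smaller-labelled block lies below it in its stack. -/
def BadlyPlaced {B S : ℕ} (C : Config B S) (b : Fin B) : Prop :=
  ∃ s a, a < b ∧ StrictlyBelow C s a b

/-- Moves: retrieve the top block of a stack, or relocate the top block of one
stack onto another stack. -/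
inductive Move (S : ℕ) where
  | retrieve (s : Fin S)
  | relocate (src dst : Fin S)

def applyMove {B S : ℕ} (C : Config B S) : Move S → Config B S
  | .retrieve s => Function.update C s (C s).dropLast
  | .relocate src dst =>
    match (C src).getLast? with
    | some b =>
      let C' := Function.update C src (C src).dropLast
      Function.update C' dst (C' dst ++ [b])
    | none => C

def Enabled {B S : ℕ} (C : Config B S) : Move S → Prop
  | .retrieve s => ∃ b, (C s).getLast? = some b ∧ ∀ (s' : Fin S), ∀ b' ∈ C s', b ≤ b'
  | .relocate src dst => src ≠ dst ∧ C src ≠ []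

def play {B S : ℕ} (C : Config B S) : List (Move S) → Config B S
  | [] => C
  | m :: ms => play (applyMove C m) ms

def AllEnabled {B S : ℕ} (C : Config B S) : List (Move S) → Prop
  | [] => True
  | m :: ms => Enabled C m ∧ AllEnabled (applyMove C m) ms

/-- A feasible move sequence: every move is enabled and at the end all blocks
have been retrieved. -/
def Feasible {B S : ℕ} (C : Config B S) (ms : List (Move S)) : Prop :=
  AllEnabled C ms ∧ ∀ s, play C ms s = []

/-- `b` is the block moved by `m` (a relocation) performed in configuration `C`. -/
def MovedBlock {B S : ℕ} (C : Config B S) (m : Move S) (b : Fin B) : Prop :=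
  ∃ src dst, m = .relocate src dst ∧ src ≠ dst ∧ (C src).getLast? = some b

/-- The four types of relocation moves. -/
inductive MType where
  | BB | BG | GB | GG

/-- The relocation `m`, moving block `b` from configuration `C`, has the given type. -/
def MTypeOf {B S : ℕ} (C : Config B S) (m : Move S) (b : Fin B) : MType → Prop
  | .BB => BadlyPlaced C b ∧ BadlyPlaced (applyMove C m) b
  | .BG => BadlyPlaced C b ∧ ¬ BadlyPlaced (applyMove C m) b
  | .GB => ¬ BadlyPlaced C b ∧ BadlyPlaced (applyMove C m) b
  | .GG => ¬ BadlyPlaced C b ∧ ¬ BadlyPlaced (applyMove C m) b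

/-- `m` is a relocation of a block of `𝔅`. -/
def RelocIn {B S : ℕ} (𝔅 : Set (Fin B)) (C : Config B S) (m : Move S) : Prop :=
  ∃ b ∈ 𝔅, MovedBlock C m b

/-- `m` is a relocation of a block of `𝔅` of type `mt`. -/
def RelocTypeIn {B S : ℕ} (mt : MType) (𝔅 : Set (Fin B)) (C : Config B S) (m : Move S) : Prop :=
  ∃ b ∈ 𝔅, MovedBlock C m b ∧ MTypeOf C m b mt

/-- `m` is a non-BG relocation of a block of `𝔅`. -/
def RelocNonBGIn {B S : ℕ} (𝔅 : Set (Fin B)) (C : Config B S) (m : Move S) : Prop :=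
  ∃ b ∈ 𝔅, MovedBlock C m b ∧ ¬ MTypeOf C m b MType.BG

/-- Count the moves of a sequence satisfying `P` (evaluated in the configuration
in which each move is performed). -/
noncomputable def countMoves {B S : ℕ} (P : Config B S → Move S → Prop) :
    Config B S → List (Move S) → ℕ
  | _, [] => 0
  | C, m :: ms =>
    (@ite ℕ (P C m) (Classical.propDecidable _) 1 0) + countMoves P (applyMove C m) ms

/-- Minimum over feasible move sequences of the number of moves satisfying `P`. -/
noncomputable def fMin {B S : ℕ} (C : Config B S) (P : Config B S → Move S → Prop) : ℕ :=
  sInf { n | ∃ ms, Feasible C ms ∧ countMoves P C ms = n }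

/-- `f(𝔅)`: least number of relocations applied to blocks of `𝔅`. -/
noncomputable def fRel {B S : ℕ} (C : Config B S) (𝔅 : Set (Fin B)) : ℕ :=
  fMin C (RelocIn 𝔅)

/-- `f_mt(𝔅)`: least number of type-`mt` relocations applied to blocks of `𝔅`. -/
noncomputable def fTyp {B S : ℕ} (C : Config B S) (mt : MType) (𝔅 : Set (Fin B)) : ℕ :=
  fMin C (RelocTypeIn mt 𝔅)

/-- `f_nonBG(𝔅)`: least number of non-BG relocations applied to blocks of `𝔅`. -/
noncomputable def fNonBG {B S : ℕ} (C : Config B S) (𝔅 : Set (Fin B)) : ℕ :=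
  fMin C (RelocNonBGIn 𝔅)

/-- The top 1st layer: the topmost block of each stack. -/
def TopLayer {B S : ℕ} (C : Config B S) : Set (Fin B) :=
  {b | ∃ s, (C s).getLast? = some b}

/-- The top `k` layers: the topmost `k` blocks of every stack. -/
def TopK {B S : ℕ} (C : Config B S) (k : ℕ) : Set (Fin B) :=
  {b | ∃ s, b ∈ (C s).drop ((C s).length - k)}

/-- The top `j`-th layer: the `j`-th block from the top of every stack. -/
def TopJth {B S : ℕ} (C : Config B S) (j : ℕ) : Set (Fin B) :=
  {b | ∃ s, (C s)[(C s).length - j]? = some b}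

/-- A virtual layer: a set of blocks containing exactly one block from each stack. -/
def VirtualLayer {B S : ℕ} (C : Config B S) (V : Set (Fin B)) : Prop :=
  ∀ s : Fin S, ∃! b : Fin B, b ∈ V ∧ b ∈ C s

/-- `a` lies at or below the `V`-block of stack `s`. -/
def AtOrBelowLayer {B S : ℕ} (C : Config B S) (V : Set (Fin B)) (s : Fin S) (a : Fin B) : Prop :=
  ∃ b j, b ∈ V ∧ (C s)[j]? = some b ∧ a ∈ (C s).take (j + 1)

/-- `V` is a virtual layer satisfying the conditions of Property 5:
(1) in some stack, a block strictly below the `V`-block of that stack has a smaller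
label than every block of `V`; (2) every badly placed block of `V` has a label
strictly greater than the minimum label present in stack `s` after deleting all
blocks strictly above the `V`-block of `s`, for every stack `s`. -/
def P5 {B S : ℕ} (C : Config B S) (V : Set (Fin B)) : Prop :=
  VirtualLayer C V ∧
  (∃ s a b, b ∈ V ∧ StrictlyBelow C s a b ∧ ∀ c ∈ V, a < c) ∧
  (∀ b ∈ V, BadlyPlaced C b → ∀ s : Fin S, ∃ a, AtOrBelowLayer C V s a ∧ a < b)

/-- A pair of virtual layers `V₁` (upper), `V₂` (lower) with shared well-placed
block `bstar` satisfying the conditions of Property 7. -/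
def P7 {B S : ℕ} (C : Config B S) (V₁ V₂ : Set (Fin B)) (bstar : Fin B) : Prop :=
  V₁ ∩ V₂ = {bstar} ∧
  ¬ BadlyPlaced C bstar ∧
  (∀ s : Fin S, bstar ∉ C s →
    ∃ b₁ b₂, b₁ ∈ V₁ ∧ b₂ ∈ V₂ ∧ StrictlyBelow C s b₂ b₁) ∧
  P5 C V₁ ∧ P5 C V₂ ∧
  (∀ s : Fin S, ∃ a, AtOrBelowLayer C V₁ s a ∧ a ≤ bstar) ∧
  (∃ s : Fin S, ∀ a, AtOrBelowLayer C V₁ s a → bstar ≤ a)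

/-- Push blocks one by one onto the indicated stacks. -/
def pushAll {B S : ℕ} (C : Config B S) : List (Fin B × Fin S) → Config B S
  | [] => C
  | p :: rest => pushAll (Function.update C p.2 (C p.2 ++ [p.1])) rest

/-- The blocks lying strictly above position `i` of stack `s`, listed from the
top of the stack downward (the processing order of the experiment). -/
def aboveList {B S : ℕ} (C : Config B S) (s : Fin S) (i : ℕ) : List (Fin B) :=
  ((C s).drop (i + 1)).reverse

/-- The arrangement resulting from the experiment of Property 4: the blocks above
position `i` of stack `s` are relocated exactly once, from the top downward, onto
the stacks listed in `ds`. -/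
def expResult {B S : ℕ} (C : Config B S) (s : Fin S) (i : ℕ) (ds : List (Fin S)) :
    Config B S :=
  pushAll (Function.update C s ((C s).take (i + 1))) ((aboveList C s i).zip ds)

/-- The condition of Property 4 (target block at position `i` of stack `sStar`):
in every experiment, some relocated block ends badly placed. -/
def P4Cond {B S : ℕ} (C : Config B S) (sStar : Fin S) (i : ℕ) : Prop :=
  ∀ ds : List (Fin S), ds.length = (aboveList C sStar i).length →
    (∀ d ∈ ds, d ≠ sStar) →
    ∃ b ∈ aboveList C sStar i, BadlyPlaced (expResult C sStar i ds) b

/-- The set `𝔅⁴`: the blocks above the target block together with, for each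
nonempty stack other than the target's stack, its block of minimum label. -/
def B4Set {B S : ℕ} (C : Config B S) (sStar : Fin S) (i : ℕ) : Set (Fin B) :=
  {b | b ∈ aboveList C sStar i} ∪
  {b | ∃ s, s ≠ sStar ∧ b ∈ C s ∧ ∀ b' ∈ C s, b ≤ b'}

/-- The number of direct blockages: adjacent pairs in a stack whose upper block
has a strictly larger label. -/
def directBlockages {B S : ℕ} (C : Config B S) : ℕ :=
  ∑ s : Fin S, (((C s).zip (C s).tail).filter (fun p => decide (p.1 < p.2))).length

/-- The number of relocations in a move sequence. -/
def relocCount {S : ℕ} (ms : List (Move S)) : ℕ :=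
  (ms.filter (fun m => match m with | Move.relocate _ _ => true | Move.retrieve _ => false)).length

/-- The minimum number of relocations over all feasible move sequences. -/
noncomputable def fAll {B S : ℕ} (C : Config B S) : ℕ :=
  sInf { n | ∃ ms, Feasible C ms ∧ relocCount ms = n }

/-- `g(L)`: `L` plus the minimum number of direct blockages over all partial
plans with exactly `L` relocations. -/
noncomputable def gIter {B S : ℕ} (C : Config B S) (L : ℕ) : ℕ :=
  L + sInf { d | ∃ ms : List (Move S), AllEnabled C ms ∧ relocCount ms = L ∧
      d = directBlockages (play C ms) }
section AuxFeas
variable {B S : ℕ}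

/-- total number of blocks in a configuration -/
def totalBlocks (C : Config B S) : ℕ := ∑ s, (C s).length

lemma totalBlocks_update (C : Config B S) (s : Fin S) (l : List (Fin B)) :
    totalBlocks (Function.update C s l) + (C s).length = totalBlocks C + l.length := by
  unfold totalBlocks
  have h : ∀ x, (Function.update C s l x).length
      = Function.update (fun x => (C x).length) s l.length x := fun x =>
    Function.apply_update (fun _ l => l.length) C s l x
  simp only [h]
  rw [Finset.sum_update_of_mem (Finset.mem_univ s),
    Finset.sum_eq_add_sum_sdiff_singleton_of_mem (Finset.mem_univ s) (fun x => (C x).length)]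
  ring

lemma dropLast_reverse' (l : List (Fin B)) : l.dropLast.reverse = l.reverse.tail := by
  conv_lhs => rw [← List.reverse_reverse l]
  rw [List.dropLast_reverse, List.reverse_reverse]

/-- All-empty configurations are feasible with the empty plan. -/
lemma feasible_nil (C : Config B S) (h : ∀ s, C s = []) : Feasible C [] :=
  ⟨trivial, h⟩

lemma exists_feasible (hS : 2 ≤ S) :
    ∀ n : ℕ, ∀ C : Config B S, totalBlocks C ≤ n → ∃ ms, Feasible C ms := by
  intro n
  induction n with
  | zero =>
    intro C hC
    refine ⟨[], feasible_nil C fun s => ?_⟩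
    have h0 : totalBlocks C = 0 := Nat.le_zero.mp hC
    have := (Finset.sum_eq_zero_iff.mp h0) s (Finset.mem_univ s)
    exact List.length_eq_zero_iff.mp this
  | succ n ih =>
    have inner : ∀ k : ℕ, ∀ C : Config B S, totalBlocks C ≤ n + 1 →
        ∀ m : Fin B, ∀ s : Fin S, m ∈ C s → (∀ s', ∀ b' ∈ C s', m ≤ b') →
        (C s).reverse.idxOf m ≤ k → ∃ ms, Feasible C ms := by
      intro k
      induction k with
      | zero =>
        intro C hC m s hm hmin hidx
        -- m is the top of stack s
        have hrevne : (C s).reverse ≠ [] := by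
          simp only [ne_eq, List.reverse_eq_nil_iff]
          exact List.ne_nil_of_mem hm
        obtain ⟨a, t, hat⟩ := List.exists_cons_of_ne_nil hrevne
        have ham : a = m := by
          by_contra hne
          rw [hat, List.idxOf_cons_ne t hne] at hidx
          omega
        have hlast : (C s).getLast? = some m := by
          rw [← List.head?_reverse, hat, ham]; rfl
        have hen : Enabled C (.retrieve s) := ⟨m, hlast, hmin⟩
        set C' := Function.update C s (C s).dropLast with hC'
        have happ : applyMove C (.retrieve s) = C' := rfl
        have hlen : (C s).length ≥ 1 := List.length_pos_iff.mpr (List.ne_nil_of_mem hm)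
        have htot : totalBlocks C' + (C s).length = totalBlocks C + ((C s).length - 1) := by
          have := totalBlocks_update C s (C s).dropLast
          rwa [List.length_dropLast] at this
        have htot' : totalBlocks C' ≤ n := by omega
        obtain ⟨ms, hms1, hms2⟩ := ih C' htot'
        exact ⟨.retrieve s :: ms, ⟨hen, by rw [happ]; exact hms1⟩,
          by intro s'; show play (applyMove C _) ms s' = []; rw [happ]; exact hms2 s'⟩
      | succ k ihk =>
        intro C hC m s hm hmin hidx
        by_cases hk : (C s).reverse.idxOf m ≤ k
        · exact ihk C hC m s hm hmin hk
        have hidx' : (C s).reverse.idxOf m = k + 1 := by omega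
        have hrevne : (C s).reverse ≠ [] := by
          simp only [ne_eq, List.reverse_eq_nil_iff]
          exact List.ne_nil_of_mem hm
        obtain ⟨a, t, hat⟩ := List.exists_cons_of_ne_nil hrevne
        have ham : a ≠ m := by
          intro h
          rw [hat, h, List.idxOf_cons_self] at hidx'
          omega
        have hmt : m ∈ t := by
          have : m ∈ (C s).reverse := List.mem_reverse.mpr hm
          rw [hat] at this
          rcases List.mem_cons.mp this with h | h
          · exact absurd h.symm ham
          · exact h
        have hlast : (C s).getLast? = some a := by
          rw [← List.head?_reverse, hat]; rfl
        have hane : C s ≠ [] := List.ne_nil_of_mem hm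
        -- target stack
        set tgt : Fin S := if s = ⟨0, by omega⟩ then ⟨1, by omega⟩ else ⟨0, by omega⟩ with htgt
        have hst : s ≠ tgt := by
          rw [htgt]
          by_cases h : s = (⟨0, by omega⟩ : Fin S)
          · rw [if_pos h, h]
            exact Fin.ne_of_val_ne (by norm_num)
          · rw [if_neg h]; exact h
        have hen : Enabled C (.relocate s tgt) := ⟨hst, hane⟩
        set D := Function.update C s (C s).dropLast with hD
        set C' := Function.update D tgt (D tgt ++ [a]) with hC'
        have happ : applyMove C (.relocate s tgt) = C' := by
          show (match (C s).getLast? with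
            | some b => Function.update (Function.update C s (C s).dropLast) tgt
                ((Function.update C s (C s).dropLast) tgt ++ [b])
            | none => C) = C'
          rw [hlast]
        have hC's : C' s = (C s).dropLast := by
          rw [hC', Function.update_of_ne hst, hD, Function.update_self]
        have hDtgt : D tgt = C tgt := by
          rw [hD, Function.update_of_ne (Ne.symm hst)]
        -- m in C' s and new index
        have hm' : m ∈ C' s := by
          rw [hC's, ← List.mem_reverse, dropLast_reverse', hat]
          exact hmt
        have hidx'' : (C' s).reverse.idxOf m ≤ k := by
          rw [hC's, dropLast_reverse', hat]
          show (t).idxOf m ≤ k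
          have : (a :: t).idxOf m = t.idxOf m + 1 := List.idxOf_cons_ne t ham
          rw [hat] at hidx'
          omega
        -- min property
        have hamem : a ∈ C s := by
          have : a ∈ (C s).reverse := by rw [hat]; exact List.mem_cons_self
          exact List.mem_reverse.mp this
        have hmin' : ∀ s', ∀ b' ∈ C' s', m ≤ b' := by
          intro s' b' hb'
          by_cases h1 : s' = tgt
          · rw [hC', h1, Function.update_self, hDtgt] at hb'
            rcases List.mem_append.mp hb' with h | h
            · exact hmin tgt b' h
            · have : b' = a := List.mem_singleton.mp h
              exact this ▸ hmin s a hamem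
          · rw [hC', Function.update_of_ne h1] at hb'
            by_cases h2 : s' = s
            · rw [hD, h2, Function.update_self] at hb'
              exact hmin s b' (List.dropLast_subset _ hb')
            · rw [hD, Function.update_of_ne h2] at hb'
              exact hmin s' b' hb'
        -- total unchanged
        have hlen : (C s).length ≥ 1 := List.length_pos_iff.mpr hane
        have ht1 : totalBlocks D + (C s).length = totalBlocks C + ((C s).length - 1) := by
          have := totalBlocks_update C s (C s).dropLast
          rwa [List.length_dropLast] at this
        have ht2 : totalBlocks C' + (D tgt).length = totalBlocks D + ((D tgt).length + 1) := by
          have := totalBlocks_update D tgt (D tgt ++ [a])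
          rwa [List.length_append, List.length_singleton] at this
        have htot : totalBlocks C' ≤ n + 1 := by omega
        obtain ⟨ms, hms1, hms2⟩ := ihk C' htot m s hm' hmin' hidx''
        exact ⟨.relocate s tgt :: ms, ⟨hen, by rw [happ]; exact hms1⟩,
          by intro s'; show play (applyMove C _) ms s' = []; rw [happ]; exact hms2 s'⟩
    intro C hC
    by_cases hz : ∀ s, C s = []
    · exact ⟨[], feasible_nil C hz⟩
    · push_neg at hz
      classical
      obtain ⟨s₀, hs₀⟩ := hz
      set P : Finset (Fin B) := Finset.univ.filter (fun b => ∃ s, b ∈ C s) with hP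
      have hPne : P.Nonempty := by
        obtain ⟨b₀, hb₀⟩ := List.exists_mem_of_ne_nil (C s₀) hs₀
        refine ⟨b₀, ?_⟩
        rw [hP]
        simp only [Finset.mem_filter, Finset.mem_univ, true_and]
        exact ⟨s₀, hb₀⟩
      set m := P.min' hPne with hmdef
      have hmP : m ∈ P := P.min'_mem hPne
      obtain ⟨s, hms⟩ : ∃ s, m ∈ C s := by
        rw [hP] at hmP; simpa using hmP
      have hmin : ∀ s', ∀ b' ∈ C s', m ≤ b' := by
        intro s' b' hb'
        refine P.min'_le b' ?_
        rw [hP]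
        simp only [Finset.mem_filter, Finset.mem_univ, true_and]
        exact ⟨s', hb'⟩
      exact inner ((C s).reverse.idxOf m) C hC m s hms hmin le_rfl

end AuxFeas

section MainAux
variable {B S : ℕ}

lemma topLayer_BB_first (hS : 2 ≤ S) (C : Config B S) (hne : ∀ s, C s ≠ [])
    (hcond : ∀ b ∈ TopLayer C, ∀ s : Fin S, ∃ b' ∈ C s, b' < b)
    (ms : List (Move S)) (hfeas : Feasible C ms) :
    1 ≤ countMoves (RelocTypeIn MType.BB (TopLayer C)) C ms := by
  obtain ⟨hen, hend⟩ := hfeas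
  cases ms with
  | nil =>
    exfalso
    exact hne ⟨0, by omega⟩ (hend ⟨0, by omega⟩)
  | cons m₀ rest =>
    obtain ⟨hen₀, -⟩ := hen
    cases m₀ with
    | retrieve s =>
      exfalso
      obtain ⟨b, hb, hmin⟩ := hen₀
      obtain ⟨b', hb', hlt⟩ := hcond b ⟨s, hb⟩ s
      exact absurd (hmin s b' hb') (not_le.mpr hlt)
    | relocate src dst =>
      obtain ⟨hsd, hsrc⟩ := hen₀
      obtain ⟨b, hb⟩ : ∃ b, (C src).getLast? = some b := by
        rcases h : (C src).getLast? with - | b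
        · exact absurd (List.getLast?_eq_none_iff.mp h) hsrc
        · exact ⟨b, rfl⟩
      have hbTop : b ∈ TopLayer C := ⟨src, hb⟩
      have hBPb : BadlyPlaced C b := by
        obtain ⟨a, ha, hab⟩ := hcond b hbTop src
        refine ⟨src, a, hab, ?_⟩
        obtain ⟨i, hi⟩ := List.mem_iff_getElem?.mp ha
        have hilt : i < (C src).length := by
          obtain ⟨h1, -⟩ := List.getElem?_eq_some_iff.mp hi
          exact h1
        have hj : (C src)[(C src).length - 1]? = some b := by
          rw [← List.getLast?_eq_getElem?]; exact hb
        have hine : i ≠ (C src).length - 1 := by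
          intro h
          rw [h, hj] at hi
          exact absurd (Option.some.inj hi) (ne_of_gt hab)
        exact ⟨i, (C src).length - 1, by omega, hi, hj⟩
      set D := Function.update C src (C src).dropLast with hD
      set C' := Function.update D dst (D dst ++ [b]) with hC'
      have happ : applyMove C (.relocate src dst) = C' := by
        show (match (C src).getLast? with
          | some b => Function.update (Function.update C src (C src).dropLast) dst
              ((Function.update C src (C src).dropLast) dst ++ [b])
          | none => C) = C'
        rw [hb]
      have hC'dst : C' dst = C dst ++ [b] := by
        rw [hC', Function.update_self, hD, Function.update_of_ne (Ne.symm hsd)]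
      have hBPa : BadlyPlaced (applyMove C (.relocate src dst)) b := by
        rw [happ]
        obtain ⟨a, ha, hab⟩ := hcond b hbTop dst
        refine ⟨dst, a, hab, ?_⟩
        obtain ⟨i, hi⟩ := List.mem_iff_getElem?.mp ha
        have hilt : i < (C dst).length := by
          obtain ⟨h1, -⟩ := List.getElem?_eq_some_iff.mp hi
          exact h1
        refine ⟨i, (C dst).length, hilt, ?_, ?_⟩
        · rw [hC'dst, List.getElem?_append_left hilt]; exact hi
        · rw [hC'dst]
          simp [List.getElem?_append_right]
      have hP : RelocTypeIn MType.BB (TopLayer C) C (.relocate src dst) :=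
        ⟨b, hbTop, ⟨src, dst, rfl, hsd, hb⟩, hBPb, hBPa⟩
      show 1 ≤ countMoves _ C (Move.relocate src dst :: rest)
      rw [countMoves, if_pos hP]
      exact Nat.le_add_right 1 _

end MainAux

/-- Property 2: if every stack is nonempty and the minimum label of
the top 1st layer `𝔅²` is strictly greater than the maximum over the stacks of
the minimum label in the stack (equivalently, every block of `𝔅²` has, in every
stack, some block of smaller label), then every feasible move sequence contains
at least one BB relocation of a block of `𝔅²`; that is, `f_BB(𝔅²) ≥ 1`. -/
theorem brp_property2 {B S : ℕ} (hS : 2 ≤ S) (hB : 1 ≤ B)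
    (C : Config B S) (hC : IsConfig C) (hne : ∀ s, C s ≠ [])
    (hcond : ∀ b ∈ TopLayer C, ∀ s : Fin S, ∃ b' ∈ C s, b' < b) :
    (∀ ms, Feasible C ms → 1 ≤ countMoves (RelocTypeIn MType.BB (TopLayer C)) C ms) ∧
    1 ≤ fTyp C MType.BB (TopLayer C) := by

  constructor
  · exact topLayer_BB_first hS C hne hcond
  · unfold fTyp fMin
    refine le_csInf ?_ ?_
    · obtain ⟨ms, hms⟩ := exists_feasible hS (totalBlocks C) C le_rfl
      exact ⟨_, ms, hms, rfl⟩
    · rintro n ⟨ms, hms, rfl⟩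
      exact topLayer_BB_first hS C hne hcond ms hms
end

section
/- (Validity of LB2) Let C be an initial configuration of the BRP in which every stack is nonempty, let 𝔅¹ be the set of blocks badly placed in C, and let 𝔅² be the top 1st layer of C. If the minimum label among the blocks of 𝔅² is strictly greater than the maximum over all stacks s of the minimum label occurring in stack s, then f(Fin B) ≥ |𝔅¹| + 1. -/
section LB2Aux

variable {B S : ℕ}

lemma lb2_getElem?_lt {α : Type*} {l : List α} {i : ℕ} {a : α} (h : l[i]? = some a) :
    i < l.length := (List.getElem?_eq_some_iff.1 h).1

lemma lb2_getLast_idx {α : Type*} {l : List α} {b : α} (h : l.getLast? = some b) :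
    l[l.length - 1]? = some b := by rwa [← List.getLast?_eq_getElem?]

lemma lb2_ne_nil_of_getLast {α : Type*} {l : List α} {b : α} (h : l.getLast? = some b) :
    l ≠ [] := by intro hl; rw [hl] at h; simp at h

lemma lb2_getLast_mem {α : Type*} {l : List α} {t : α} (h : l.getLast? = some t) : t ∈ l :=
  List.mem_of_getElem? (lb2_getLast_idx h)

lemma lb2_getElem?_dropLast_of_lt {α : Type*} {l : List α} {i : ℕ} (h : i < l.length - 1) :
    l.dropLast[i]? = l[i]? := by rw [List.getElem?_dropLast, if_pos h]

lemma lb2_mem_dropLast {α : Type*} {l : List α} {b t : α} (ht : l.getLast? = some t)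
    (hb : b ∈ l) (hne : b ≠ t) : b ∈ l.dropLast := by
  have hnil := lb2_ne_nil_of_getLast ht
  have hgl : l.getLast hnil = t := by
    have h2 := List.getLast?_eq_getLast hnil
    rw [h2] at ht; exact Option.some.inj ht
  have hsplit := List.dropLast_append_getLast hnil
  rw [← hsplit] at hb
  rcases List.mem_append.1 hb with h | h
  · exact h
  · exfalso; apply hne; rw [hgl] at h; simpa using h

lemma lb2_applyMove_relocate {C : Config B S} {src dst : Fin S} {b₀ : Fin B}
    (h : (C src).getLast? = some b₀) :
    applyMove C (.relocate src dst) =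
      Function.update (Function.update C src (C src).dropLast) dst
        ((Function.update C src (C src).dropLast) dst ++ [b₀]) := by
  simp only [applyMove, h]

lemma lb2_exists_getLast {α : Type*} {l : List α} (h : l ≠ []) : ∃ t, l.getLast? = some t := by
  rcases hl : l.getLast? with _ | t
  · exact absurd (List.getLast?_eq_none_iff.1 hl) h
  · exact ⟨t, rfl⟩

lemma lb2_bp_reloc {C : Config B S} {src dst : Fin S} {b₀ b : Fin B}
    (hsd : src ≠ dst) (h0 : (C src).getLast? = some b₀) (hb : b ≠ b₀)
    (hbp : BadlyPlaced C b) : BadlyPlaced (applyMove C (.relocate src dst)) b := by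
  obtain ⟨s, a, hab, i, j, hij, hi, hj⟩ := hbp
  rw [lb2_applyMove_relocate h0]
  have hsrc : s = src → j < (C src).length - 1 := by
    intro hsr; subst hsr
    have h1 := lb2_getElem?_lt hj
    have h2 : j ≠ (C s).length - 1 := by
      intro he; rw [he, lb2_getLast_idx h0] at hj
      exact hb (Option.some.inj hj).symm
    omega
  have hkey : ∀ (m : ℕ) (x : Fin B), (C s)[m]? = some x → (s = src → m < (C src).length - 1) →
      ((Function.update (Function.update C src (C src).dropLast) dst
        ((Function.update C src (C src).dropLast) dst ++ [b₀])) s)[m]? = some x := by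
    intro m x hm hlt
    by_cases hss : s = dst
    · subst hss
      rw [Function.update_self, Function.update_of_ne (Ne.symm hsd),
        List.getElem?_append, if_pos (lb2_getElem?_lt hm)]
      exact hm
    · rw [Function.update_of_ne hss]
      by_cases hsr : s = src
      · subst hsr
        rw [Function.update_self, lb2_getElem?_dropLast_of_lt (hlt rfl)]
        exact hm
      · rw [Function.update_of_ne hsr]; exact hm
  exact ⟨s, a, hab, i, j, hij, hkey i a hi (fun h => lt_trans hij (hsrc h)), hkey j b hj hsrc⟩

lemma lb2_bp_retrieve {C : Config B S} {s₀ : Fin S} {b : Fin B}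
    (hen : Enabled C (.retrieve s₀)) (hbp : BadlyPlaced C b) :
    BadlyPlaced (applyMove C (.retrieve s₀)) b := by
  obtain ⟨b₀, h0, hmin⟩ := hen
  obtain ⟨s, a, hab, i, j, hij, hi, hj⟩ := hbp
  have hbne : b ≠ b₀ := by
    have ha : a ∈ C s := List.mem_of_getElem? hi
    intro he
    exact absurd hab (not_lt.2 (he ▸ hmin s a ha))
  have hsrc : s = s₀ → j < (C s₀).length - 1 := by
    intro hsr; subst hsr
    have h1 := lb2_getElem?_lt hj
    have h2 : j ≠ (C s).length - 1 := by
      intro he; rw [he, lb2_getLast_idx h0] at hj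
      exact hbne (Option.some.inj hj).symm
    omega
  show BadlyPlaced (Function.update C s₀ (C s₀).dropLast) b
  have hkey : ∀ (m : ℕ) (x : Fin B), (C s)[m]? = some x → (s = s₀ → m < (C s₀).length - 1) →
      ((Function.update C s₀ (C s₀).dropLast) s)[m]? = some x := by
    intro m x hm hlt
    by_cases hss : s = s₀
    · subst hss
      rw [Function.update_self, lb2_getElem?_dropLast_of_lt (hlt rfl)]
      exact hm
    · rw [Function.update_of_ne hss]; exact hm
  exact ⟨s, a, hab, i, j, hij, hkey i a hi (fun h => lt_trans hij (hsrc h)), hkey j b hj hsrc⟩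

lemma lb2_lb1 : ∀ (ms : List (Move S)) (C : Config B S), AllEnabled C ms →
    (∀ s, play C ms s = []) →
    {b | BadlyPlaced C b}.ncard ≤ countMoves (RelocIn (Set.univ : Set (Fin B))) C ms := by
  intro ms
  induction ms with
  | nil =>
    intro C _ hend
    have hemp : {b : Fin B | BadlyPlaced C b} = ∅ := by
      ext b
      simp only [Set.mem_setOf_eq, Set.mem_empty_iff_false, iff_false]
      rintro ⟨s, a, _, i, j, _, _, hj⟩
      have : C s = [] := hend s
      rw [this] at hj; simp at hj
    rw [hemp]
    simp [countMoves]
  | cons m rest ih =>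
    intro C hen hend
    obtain ⟨hm, hrest⟩ := hen
    have hend' : ∀ s, play (applyMove C m) rest s = [] := hend
    have ihx := ih (applyMove C m) hrest hend'
    cases m with
    | retrieve s₀ =>
      have hnr : ¬ RelocIn (Set.univ : Set (Fin B)) C (.retrieve s₀) := by
        rintro ⟨b, -, src, dst, heq, -, -⟩
        cases heq
      have hcnt : countMoves (RelocIn (Set.univ : Set (Fin B))) C (Move.retrieve s₀ :: rest)
          = countMoves (RelocIn (Set.univ : Set (Fin B))) (applyMove C (.retrieve s₀)) rest := by
        simp only [countMoves]
        rw [if_neg hnr, Nat.zero_add]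
      rw [hcnt]
      exact le_trans (Set.ncard_le_ncard (fun b hb => lb2_bp_retrieve hm hb)
        (Set.toFinite _)) ihx
    | relocate src dst =>
      obtain ⟨hsd, hnem⟩ := hm
      obtain ⟨b₀, hb₀⟩ := lb2_exists_getLast hnem
      have hrel : RelocIn (Set.univ : Set (Fin B)) C (.relocate src dst) :=
        ⟨b₀, Set.mem_univ _, src, dst, rfl, hsd, hb₀⟩
      have hsub : {b | BadlyPlaced C b} ⊆
          {b | BadlyPlaced (applyMove C (.relocate src dst)) b} ∪ {b₀} := by
        intro b hb
        by_cases hbb : b = b₀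
        · exact Or.inr hbb
        · exact Or.inl (lb2_bp_reloc hsd hb₀ hbb hb)
      have h1 : {b | BadlyPlaced C b}.ncard ≤
          {b | BadlyPlaced (applyMove C (.relocate src dst)) b}.ncard + 1 := by
        refine le_trans (Set.ncard_le_ncard hsub (Set.toFinite _)) ?_
        refine le_trans (Set.ncard_union_le _ _) ?_
        rw [Set.ncard_singleton]
      have h2 : countMoves (RelocIn (Set.univ : Set (Fin B))) C (Move.relocate src dst :: rest)
          = 1 + countMoves (RelocIn (Set.univ : Set (Fin B)))
              (applyMove C (.relocate src dst)) rest := by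
        simp only [countMoves]
        rw [if_pos hrel]
      omega

lemma lb2_sum_len_update (C : Config B S) (s : Fin S) (L : List (Fin B)) :
    (∑ s', ((Function.update C s L) s').length) + (C s).length
      = (∑ s', (C s').length) + L.length := by
  classical
  have h1 : (∑ s', ((Function.update C s L) s').length)
      = ∑ s', Function.update (fun x => (C x).length) s L.length s' :=
    Finset.sum_congr rfl fun x _ => by
      by_cases hx : x = s
      · subst hx; rw [Function.update_self, Function.update_self]
      · rw [Function.update_of_ne hx, Function.update_of_ne hx]
  rw [h1, Finset.sum_update_of_mem (Finset.mem_univ s),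
    ← Finset.add_sum_erase Finset.univ (fun x => (C x).length) (Finset.mem_univ s),
    Finset.erase_eq]
  omega

lemma lb2_exists_feasible (hS : 2 ≤ S) :
    ∀ n : ℕ, ∀ C : Config B S, (∑ s, (C s).length) ≤ n → ∃ ms, Feasible C ms := by
  classical
  intro n
  induction n with
  | zero =>
    intro C hC
    have hall : ∀ s, C s = [] := by
      intro s
      have := Finset.sum_eq_zero_iff.1 (Nat.le_zero.1 hC) s (Finset.mem_univ s)
      exact List.length_eq_zero_iff.1 this
    exact ⟨[], trivial, hall⟩
  | succ n ih =>
    intro C hC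
    by_cases hall : ∀ s, C s = []
    · exact ⟨[], trivial, hall⟩
    push_neg at hall
    have inner : ∀ k (C : Config B S), (∑ s', (C s').length) ≤ n + 1 →
        ∀ (s : Fin S) (b : Fin B), b ∈ C s → (∀ (s' : Fin S), ∀ b' ∈ C s', b ≤ b') →
        (C s).length ≤ k → ∃ ms, Feasible C ms := by
      intro k
      induction k with
      | zero =>
        intro C _ s b hb _ hlen
        have := List.length_pos_iff.2 (List.ne_nil_of_mem hb)
        omega
      | succ k ihk =>
        intro C hsum s b hb hmin hlen
        have hCs : C s ≠ [] := List.ne_nil_of_mem hb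
        obtain ⟨t, ht⟩ := lb2_exists_getLast hCs
        have hlpos : 0 < (C s).length := List.length_pos_iff.2 hCs
        by_cases htb : t = b
        · -- retrieve the minimal block
          have hen : Enabled C (.retrieve s) := ⟨b, by rw [ht, htb], hmin⟩
          have hs2 : (∑ s', ((Function.update C s (C s).dropLast) s').length) ≤ n := by
            have he := lb2_sum_len_update C s (C s).dropLast
            have hdl : (C s).dropLast.length = (C s).length - 1 := List.length_dropLast
            omega
          obtain ⟨ms, hms1, hms2⟩ := ih (Function.update C s (C s).dropLast) hs2
          exact ⟨.retrieve s :: ms, ⟨hen, hms1⟩, hms2⟩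
        · -- relocate the top of s elsewhere
          obtain ⟨d, hd⟩ : ∃ d : Fin S, d ≠ s :=
            Fintype.exists_ne_of_one_lt_card (by rw [Fintype.card_fin]; omega) s
          have hen : Enabled C (.relocate s d) := ⟨Ne.symm hd, hCs⟩
          have hA := lb2_applyMove_relocate (dst := d) ht
          have hC1d : (Function.update C s (C s).dropLast) d = C d :=
            Function.update_of_ne hd _ _
          have hbs : b ∈ (Function.update (Function.update C s (C s).dropLast) d
              ((Function.update C s (C s).dropLast) d ++ [t])) s := by
            rw [Function.update_of_ne (Ne.symm hd), Function.update_self]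
            exact lb2_mem_dropLast ht hb (fun he => htb he.symm)
          have hmin2 : ∀ (s' : Fin S), ∀ b' ∈ (Function.update
              (Function.update C s (C s).dropLast) d
              ((Function.update C s (C s).dropLast) d ++ [t])) s', b ≤ b' := by
            intro s' b' hb'
            by_cases h1 : s' = d
            · subst h1
              rw [Function.update_self, hC1d] at hb'
              rcases List.mem_append.1 hb' with h | h
              · exact hmin _ b' h
              · have hbt : b' = t := by simpa using h
                subst hbt
                exact hmin s b' (lb2_getLast_mem ht)
            · rw [Function.update_of_ne h1] at hb'
              by_cases h2 : s' = s
              · subst h2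
                rw [Function.update_self] at hb'
                exact hmin s' b' ((List.dropLast_sublist (C s')).mem hb')
              · rw [Function.update_of_ne h2] at hb'
                exact hmin s' b' hb'
          have hsum2 : (∑ s', ((Function.update (Function.update C s (C s).dropLast) d
              ((Function.update C s (C s).dropLast) d ++ [t])) s').length) ≤ n + 1 := by
            have e1 := lb2_sum_len_update (Function.update C s (C s).dropLast) d
              ((Function.update C s (C s).dropLast) d ++ [t])
            have e2 := lb2_sum_len_update C s (C s).dropLast
            have hd1 : ((Function.update C s (C s).dropLast) d ++ [t]).length
                = (C d).length + 1 := by rw [hC1d]; simp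
            have hdl : (C s).dropLast.length = (C s).length - 1 := List.length_dropLast
            have hlen_eq : ((Function.update C s (C s).dropLast) d).length = (C d).length := by
              rw [hC1d]
            omega
          have hlen2 : ((Function.update (Function.update C s (C s).dropLast) d
              ((Function.update C s (C s).dropLast) d ++ [t])) s).length ≤ k := by
            rw [Function.update_of_ne (Ne.symm hd), Function.update_self,
              List.length_dropLast]
            omega
          obtain ⟨ms, hms1, hms2⟩ := ihk _ hsum2 s b hbs hmin2 hlen2
          refine ⟨.relocate s d :: ms, ⟨hen, ?_⟩, fun s' => ?_⟩
          · show AllEnabled (applyMove C (.relocate s d)) ms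
            rw [hA]; exact hms1
          · show play (applyMove C (.relocate s d)) ms s' = []
            rw [hA]; exact hms2 s'
    obtain ⟨s₀, hs₀⟩ := hall
    obtain ⟨x, hx⟩ := List.exists_mem_of_ne_nil _ hs₀
    have hFne : (Finset.univ.filter (fun b : Fin B => ∃ s, b ∈ C s)).Nonempty :=
      ⟨x, Finset.mem_filter.2 ⟨Finset.mem_univ _, s₀, hx⟩⟩
    set F := Finset.univ.filter (fun b : Fin B => ∃ s, b ∈ C s) with hF
    have hmin : ∀ (s' : Fin S), ∀ b' ∈ C s', F.min' hFne ≤ b' := fun s' b' h =>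
      F.min'_le b' (Finset.mem_filter.2 ⟨Finset.mem_univ _, s', h⟩)
    obtain ⟨sm, hsm⟩ := (Finset.mem_filter.1 (F.min'_mem hFne)).2
    exact inner ((C sm).length) C hC sm (F.min' hFne) hsm hmin le_rfl

end LB2Aux

/-- validity of LB2: if every stack is nonempty and the minimum
label of the top 1st layer is strictly greater than the maximum over the stacks
of the minimum label in the stack, then `f(Fin B) ≥ |𝔅¹| + 1`, where `𝔅¹` is the
set of badly placed blocks of `C`. -/
theorem brp_LB2 {B S : ℕ} (hS : 2 ≤ S) (hB : 1 ≤ B)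
    (C : Config B S) (hC : IsConfig C) (hne : ∀ s, C s ≠ [])
    (hcond : ∀ b ∈ TopLayer C, ∀ s : Fin S, ∃ b' ∈ C s, b' < b) :
    {b | BadlyPlaced C b}.ncard + 1 ≤ fRel C Set.univ := by
  classical
  have hS0 : 0 < S := by omega
  have key : ∀ ms, Feasible C ms →
      {b | BadlyPlaced C b}.ncard + 1 ≤ countMoves (RelocIn (Set.univ : Set (Fin B))) C ms := by
    rintro ms ⟨hen, hend⟩
    cases ms with
    | nil =>
      exact absurd (hend ⟨0, hS0⟩) (hne ⟨0, hS0⟩)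
    | cons m rest =>
      obtain ⟨hm, hrest⟩ := hen
      have hend' : ∀ s, play (applyMove C m) rest s = [] := hend
      cases m with
      | retrieve s₀ =>
        exfalso
        obtain ⟨b₀, hlast, hminb⟩ := hm
        obtain ⟨b', hb', hlt⟩ := hcond b₀ ⟨s₀, hlast⟩ s₀
        exact absurd (hminb s₀ b' hb') (not_le.2 hlt)
      | relocate src dst =>
        obtain ⟨hsd, hnem⟩ := hm
        obtain ⟨b₀, hb₀⟩ := lb2_exists_getLast hnem
        have hC'd : applyMove C (.relocate src dst) dst = C dst ++ [b₀] := by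
          rw [lb2_applyMove_relocate hb₀]
          rw [Function.update_self, Function.update_of_ne (Ne.symm hsd)]
        have hbp' : BadlyPlaced (applyMove C (.relocate src dst)) b₀ := by
          obtain ⟨a, haC, halt⟩ := hcond b₀ ⟨src, hb₀⟩ dst
          obtain ⟨i, hi⟩ := List.mem_iff_getElem?.1 haC
          refine ⟨dst, a, halt, i, (C dst).length, lb2_getElem?_lt hi, ?_, ?_⟩
          · rw [hC'd, List.getElem?_append, if_pos (lb2_getElem?_lt hi)]; exact hi
          · rw [hC'd]; exact List.getElem?_concat_length
        have hsub : {b | BadlyPlaced C b} ⊆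
            {b | BadlyPlaced (applyMove C (.relocate src dst)) b} := by
          intro b hb
          by_cases hbb : b = b₀
          · subst hbb; exact hbp'
          · exact lb2_bp_reloc hsd hb₀ hbb hb
        have h1 := lb2_lb1 rest (applyMove C (.relocate src dst)) hrest hend'
        have h2 : countMoves (RelocIn (Set.univ : Set (Fin B))) C (Move.relocate src dst :: rest)
            = 1 + countMoves (RelocIn (Set.univ : Set (Fin B)))
                (applyMove C (.relocate src dst)) rest := by
          have hrel : RelocIn (Set.univ : Set (Fin B)) C (.relocate src dst) :=
            ⟨b₀, Set.mem_univ _, src, dst, rfl, hsd, hb₀⟩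
          simp only [countMoves]
          rw [if_pos hrel]
        have h3 := Set.ncard_le_ncard hsub (Set.toFinite _)
        omega
  obtain ⟨ms₀, hms₀⟩ := lb2_exists_feasible hS (∑ s, (C s).length) C le_rfl
  have hset : {n | ∃ ms, Feasible C ms ∧
      countMoves (RelocIn (Set.univ : Set (Fin B))) C ms = n}.Nonempty :=
    ⟨_, ms₀, hms₀, rfl⟩
  obtain ⟨ms, hf, hcnt⟩ := Nat.sInf_mem hset
  have hfr : fRel C Set.univ = sInf {n | ∃ ms, Feasible C ms ∧
      countMoves (RelocIn (Set.univ : Set (Fin B))) C ms = n} := rfl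
  rw [hfr, ← hcnt]
  exact key ms hf
end
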